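/- (Block factorization of the middle response indicators.) Under the mth-order Markov model, for every integer k with m < k < K − m − 1 and all values of the variables, f(R̲^{m+1}_{k−1} | Ȳ^{2m+1}_{k+m+1}, O̲_{k+m}) = ∏_{j=k}^{k+m} f(Rⱼ | Ȳ^{m+1}_{j+1}, O̲ᵐⱼ), i.e., the conditional pmf of the block (R_k,…,R_{k+m}) given (Y_{k−m},…,Y_{k+m}, O_{k+m+1},…,O_K) equals the product over j of the conditional pmfs of Rⱼ given (Y_{j−m},…,Yⱼ, O_{j+1},…,O_{j+m}), where the O-arguments in each factor are determined by the conditioning values and the other R-entries in the block. -/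

import Mathlib

open scoped Classical BigOperators

namespace MRM

/-- Observed datum at index `j`: `some (y j)` if `r j = true` (observed), otherwise `none`
(missing, i.e. the value `?`). -/
def obs {K : ℕ} (y r : Fin K → Bool) (j : Fin K) : Option Bool :=
  if r j then some (y j) else none

/-- Probability of an event under the joint pmf `p` on outcomes and response indicators. -/
noncomputable def Pr {K : ℕ} (p : (Fin K → Bool) → (Fin K → Bool) → ℝ)
    (E : (Fin K → Bool) → (Fin K → Bool) → Prop) : ℝ :=
  ∑ y : Fin K → Bool, ∑ r : Fin K → Bool, if E y r then p y r else 0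

/-- Conditional probability `P(A | C)` under `p`. -/
noncomputable def cPr {K : ℕ} (p : (Fin K → Bool) → (Fin K → Bool) → ℝ)
    (A C : (Fin K → Bool) → (Fin K → Bool) → Prop) : ℝ :=
  Pr p (fun y r => A y r ∧ C y r) / Pr p C

/-- Event: the outcomes at the 1-based positions `lo ≤ pos ≤ hi` take the values `yv pos`.
(If `hi < lo`, or the window is out of range, this is the trivial event, matching the
convention that a vector whose lower index exceeds its upper index is the null vector.) -/
def Yeq {K : ℕ} (lo hi : ℕ) (yv : ℕ → Bool) :
    (Fin K → Bool) → (Fin K → Bool) → Prop :=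
  fun y _ => ∀ j : Fin K, lo ≤ j.1 + 1 → j.1 + 1 ≤ hi → y j = yv (j.1 + 1)

/-- Event: the response indicators at positions `lo ≤ pos ≤ hi` take the values `rv pos`. -/
def Req {K : ℕ} (lo hi : ℕ) (rv : ℕ → Bool) :
    (Fin K → Bool) → (Fin K → Bool) → Prop :=
  fun _ r => ∀ j : Fin K, lo ≤ j.1 + 1 → j.1 + 1 ≤ hi → r j = rv (j.1 + 1)

/-- Event: the observed data at positions `lo ≤ pos ≤ hi` take the values `ov pos`. -/
def Oeq {K : ℕ} (lo hi : ℕ) (ov : ℕ → Option Bool) :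
    (Fin K → Bool) → (Fin K → Bool) → Prop :=
  fun y r => ∀ j : Fin K, lo ≤ j.1 + 1 → j.1 + 1 ≤ hi → obs y r j = ov (j.1 + 1)

/-- The `m`-th order Markov model:
`p(y, r) = ∏ₖ aₖ(yₖ | ȳᵐₖ) · bₖ(rₖ | ȳᵐₖ, yₖ, o̲ᵐₖ)`, where `aₖ` and `bₖ` are strictly
positive conditional pmfs in their first argument, `aₖ` depends only on the outcomes at
1-based positions `max(1, k − m), …, k`, and `bₖ` depends only on `rₖ`, the outcomes at
positions `max(1, k − m), …, k` and the observed data at positions `k + 1, …, min(k + m, K)`.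
Indices of `Fin K` are 0-based, so the 1-based paper position of `k : Fin K` is `k.1 + 1`. -/
structure Markov (K m : ℕ) where
  p : (Fin K → Bool) → (Fin K → Bool) → ℝ
  a : Fin K → (Fin K → Bool) → ℝ
  b : Fin K → (Fin K → Bool) → (Fin K → Bool) → ℝ
  a_pos : ∀ k y, 0 < a k y
  b_pos : ∀ k y r, 0 < b k y r
  a_pmf : ∀ (k : Fin K) (y : Fin K → Bool), ∑ v : Bool, a k (Function.update y k v) = 1
  b_pmf : ∀ (k : Fin K) (y r : Fin K → Bool), ∑ v : Bool, b k y (Function.update r k v) = 1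
  a_local : ∀ (k : Fin K) (y y' : Fin K → Bool),
    (∀ j : Fin K, k.1 + 1 - m ≤ j.1 + 1 → j.1 ≤ k.1 → y j = y' j) → a k y = a k y'
  b_local : ∀ (k : Fin K) (y r y' r' : Fin K → Bool), r k = r' k →
    (∀ j : Fin K, k.1 + 1 - m ≤ j.1 + 1 → j.1 ≤ k.1 → y j = y' j) →
    (∀ j : Fin K, k.1 < j.1 → j.1 + 1 ≤ k.1 + 1 + m → obs y r j = obs y' r' j) →
    b k y r = b k y' r'
  factor : ∀ y r, p y r = ∏ k : Fin K, a k y * b k y r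
  sum_one : ∑ y : Fin K → Bool, ∑ r : Fin K → Bool, p y r = 1

/-- Real value of a binary outcome. -/
def yVal (v : Bool) : ℝ := if v then 1 else 0

/-- `cₖ(ȳᵐₖ, o̲ᵐₖ; α) = E[exp(α Yₖ) | Rₖ = 1, Ȳᵐₖ = ȳᵐₖ, O̲ᵐₖ = o̲ᵐₖ]` (`k` is 1-based). -/
noncomputable def cfun {K : ℕ} (p : (Fin K → Bool) → (Fin K → Bool) → ℝ) (m : ℕ) (α : ℝ)
    (k : ℕ) (yv : ℕ → Bool) (ov : ℕ → Option Bool) : ℝ :=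
  ∑ v : Bool, Real.exp (α * yVal v) *
    cPr p (Yeq k k (fun _ => v))
      (fun y r => Req k k (fun _ => true) y r ∧ Yeq (k - m) (k - 1) yv y r ∧
        Oeq (k + 1) (k + m) ov y r)

/-- The exponential tilting restriction with sensitivity parameters `α k` (`k` is 1-based):
`f(Yₖ | Rₖ = 0, Ȳᵐₖ, O̲ᵐₖ) = f(Yₖ | Rₖ = 1, Ȳᵐₖ, O̲ᵐₖ) · exp(αₖ Yₖ) / cₖ(Ȳᵐₖ, O̲ᵐₖ; αₖ)`. -/
def Tilt {K : ℕ} (p : (Fin K → Bool) → (Fin K → Bool) → ℝ) (m : ℕ) (α : ℕ → ℝ) : Prop :=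
  ∀ (k : ℕ), 1 ≤ k → k ≤ K → ∀ (yv : ℕ → Bool) (ov : ℕ → Option Bool),
    cPr p (Yeq k k yv)
      (fun y r => Req k k (fun _ => false) y r ∧ Yeq (k - m) (k - 1) yv y r ∧
        Oeq (k + 1) (k + m) ov y r)
    = cPr p (Yeq k k yv)
        (fun y r => Req k k (fun _ => true) y r ∧ Yeq (k - m) (k - 1) yv y r ∧
          Oeq (k + 1) (k + m) ov y r)
      * Real.exp (α k * yVal (yv k)) / cfun p m (α k) k yv ov

section Tools
variable {K : ℕ}

private def flipAt (τ : Fin K) : (Fin K → Bool) ≃ (Fin K → Bool) where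
  toFun r := Function.update r τ (!(r τ))
  invFun r := Function.update r τ (!(r τ))
  left_inv r := by
    simp [Function.update_idem, Function.update_self, Function.update_eq_self]
  right_inv r := by
    simp [Function.update_idem, Function.update_self, Function.update_eq_self]

lemma sum_flip (τ : Fin K) (F : (Fin K → Bool) → ℝ) :
    ∑ r : Fin K → Bool, F r = ∑ r : Fin K → Bool, F (Function.update r τ (!(r τ))) :=
  (Equiv.sum_comp (flipAt τ) F).symm

lemma sum_split (τ : Fin K) (F : (Fin K → Bool) → ℝ) :
    ∑ r : Fin K → Bool, F r
      = ∑ r : Fin K → Bool, if r τ = false then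
          F (Function.update r τ false) + F (Function.update r τ true) else 0 := by
  have h1 : ∀ r : Fin K → Bool,
      (if r τ = false then F (Function.update r τ false) + F (Function.update r τ true) else 0)
      = (if r τ = false then F r else 0) + (if r τ = false then F (Function.update r τ true) else 0) := by
    intro r
    by_cases h : r τ = false
    · have e : Function.update r τ false = r := by rw [← h]; exact Function.update_eq_self τ r
      rw [e, if_pos h, if_pos h, if_pos h]
    · simp [h]
  rw [Finset.sum_congr rfl (fun r _ => h1 r), Finset.sum_add_distrib]
  have h2 : ∑ r : Fin K → Bool, (if r τ = false then F (Function.update r τ true) else 0)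
      = ∑ r : Fin K → Bool, (if r τ = true then F r else 0) := by
    rw [sum_flip τ (fun r => if r τ = false then F (Function.update r τ true) else 0)]
    apply Finset.sum_congr rfl
    intro r _
    by_cases h : r τ = true
    · have e1 : Function.update (Function.update r τ false) τ true = r := by
        rw [Function.update_idem]
        conv_lhs => rw [show true = r τ from h.symm]
        exact Function.update_eq_self τ r
      simp only [Function.update_self, h, Bool.not_true, e1, if_pos rfl]
    · have h' : r τ = false := by revert h; cases r τ <;> simp
      simp only [Function.update_self, h', h, Bool.not_false]
      norm_num
  rw [h2, ← Finset.sum_add_distrib]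
  apply Finset.sum_congr rfl
  intro r _
  by_cases h : r τ = false
  · have h' : ¬ (r τ = true) := by simp [h]
    rw [if_pos h, if_neg h', add_zero]
  · have h' : r τ = true := by revert h; cases r τ <;> simp
    rw [if_neg h, if_pos h', zero_add]

end Tools
section RSdev
variable {K m : ℕ}

/-- canonical response vector of a pin specification -/
def rhat (ρ : Fin K → Option Bool) : Fin K → Bool := fun i => (ρ i).getD false

/-- constraint: pins of `ρ` hold at coordinates `≥ t`, and `r = rhat ρ` below `t`. -/
def Rcon (ρ : Fin K → Option Bool) (t : ℕ) (r : Fin K → Bool) : Prop :=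
  (∀ i : Fin K, t ≤ i.1 → ∀ v, ρ i = some v → r i = v) ∧
  (∀ i : Fin K, i.1 < t → r i = rhat ρ i)

noncomputable def RS (M : Markov K m) (ρ : Fin K → Option Bool) (y : Fin K → Bool)
    (t : ℕ) : ℝ :=
  ∑ r : Fin K → Bool, if Rcon ρ t r then
    ∏ i : Fin K, (if t ≤ i.1 then M.b i y r else 1) else 0

lemma b_agree (M : Markov K m) (i : Fin K) (y r r' : Fin K → Bool)
    (h : ∀ j : Fin K, i.1 ≤ j.1 → r j = r' j) : M.b i y r = M.b i y r' := by
  apply M.b_local i y r y r' (h i le_rfl) (fun j _ _ => rfl)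
  intro j hj _
  unfold obs
  rw [h j (le_of_lt hj)]

lemma b_upd (M : Markov K m) (i τ : Fin K) (h : τ.1 < i.1) (y r : Fin K → Bool) (v : Bool) :
    M.b i y (Function.update r τ v) = M.b i y r := by
  apply b_agree
  intro j hj
  apply Function.update_of_ne
  intro e
  rw [e] at hj
  omega

lemma prod_tail_upd (M : Markov K m) (t : ℕ) (τ : Fin K) (hτ : τ.1 = t)
    (y r : Fin K → Bool) (v : Bool) :
    (∏ i : Fin K, if t+1 ≤ i.1 then M.b i y (Function.update r τ v) else 1)
      = ∏ i : Fin K, if t+1 ≤ i.1 then M.b i y r else 1 := by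
  apply Finset.prod_congr rfl
  intro i _
  by_cases h : t + 1 ≤ i.1
  · rw [if_pos h, if_pos h, b_upd M i τ (by omega)]
  · rw [if_neg h, if_neg h]

lemma prod_split_t (M : Markov K m) (t : ℕ) (ht : t < K) (y r : Fin K → Bool) :
    (∏ i : Fin K, if t ≤ i.1 then M.b i y r else 1)
      = M.b ⟨t, ht⟩ y r * ∏ i : Fin K, (if t+1 ≤ i.1 then M.b i y r else 1) := by
  have key : ∀ i : Fin K, (if t ≤ i.1 then M.b i y r else 1)
      = (if i = ⟨t, ht⟩ then M.b i y r else 1) * (if t+1 ≤ i.1 then M.b i y r else 1) := by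
    intro i
    by_cases h : i = ⟨t, ht⟩
    · subst h; simp
    · have h' : i.1 ≠ t := fun e => h (Fin.ext e)
      by_cases h2 : t ≤ i.1
      · rw [if_pos h2, if_neg h, if_pos (by omega), one_mul]
      · rw [if_neg h2, if_neg h, if_neg (by omega), one_mul]
  rw [Finset.prod_congr rfl (fun i _ => key i), Finset.prod_mul_distrib]
  rw [Finset.prod_ite_eq' Finset.univ (⟨t, ht⟩ : Fin K) (fun i => M.b i y r),
    if_pos (Finset.mem_univ _)]

lemma RS_agree (M : Markov K m) (ρ ρ' : Fin K → Option Bool) (y : Fin K → Bool) (t : ℕ)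
    (h : ∀ i : Fin K, t ≤ i.1 → ρ i = ρ' i) : RS M ρ y t = RS M ρ' y t := by
  unfold RS
  rw [← Finset.sum_filter, ← Finset.sum_filter]
  apply Finset.sum_nbij' (fun r => fun i => if i.1 < t then rhat ρ' i else r i)
    (fun r => fun i => if i.1 < t then rhat ρ i else r i)
  · intro r hr
    rw [Finset.mem_filter] at hr ⊢
    obtain ⟨-, h1, h2⟩ := hr
    refine ⟨Finset.mem_univ _, ?_, ?_⟩
    · intro i hi v hv
      simp only [if_neg (by omega : ¬ i.1 < t)]
      exact h1 i hi v (by rw [h i hi]; exact hv)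
    · intro i hi
      simp only [if_pos hi]
  · intro r hr
    rw [Finset.mem_filter] at hr ⊢
    obtain ⟨-, h1, h2⟩ := hr
    refine ⟨Finset.mem_univ _, ?_, ?_⟩
    · intro i hi v hv
      simp only [if_neg (by omega : ¬ i.1 < t)]
      exact h1 i hi v (by rw [← h i hi]; exact hv)
    · intro i hi
      simp only [if_pos hi]
  · intro r hr
    rw [Finset.mem_filter] at hr
    funext i
    by_cases hi : i.1 < t
    · simp only [if_pos hi]
      exact (hr.2.2 i hi).symm
    · simp only [if_neg hi]
  · intro r hr
    rw [Finset.mem_filter] at hr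
    funext i
    by_cases hi : i.1 < t
    · simp only [if_pos hi]
      exact (hr.2.2 i hi).symm
    · simp only [if_neg hi]
  · intro r hr
    apply Finset.prod_congr rfl
    intro i _
    by_cases hti : t ≤ i.1
    · rw [if_pos hti, if_pos hti]
      apply b_agree
      intro j hj
      simp only [if_neg (by omega : ¬ j.1 < t)]
    · rw [if_neg hti, if_neg hti]

end RSdev
section RSdev2
variable {K m : ℕ}

lemma RS_none (M : Markov K m) (ρ : Fin K → Option Bool) (y : Fin K → Bool)
    (t : ℕ) (ht : t < K) (hρ : ρ ⟨t, ht⟩ = none) :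
    RS M ρ y t = RS M ρ y (t + 1) := by
  set τ : Fin K := ⟨t, ht⟩ with hτ
  have hτ1 : (τ : ℕ) = t := rfl
  have hrh : rhat ρ τ = false := by simp [rhat, hρ]
  unfold RS
  rw [sum_split τ (fun r => if Rcon ρ t r then
    ∏ i : Fin K, (if t ≤ i.1 then M.b i y r else 1) else 0)]
  apply Finset.sum_congr rfl
  intro r _
  by_cases hr : r τ = false
  · rw [if_pos hr]
    have hcon : ∀ v : Bool, Rcon ρ t (Function.update r τ v) ↔ Rcon ρ t r := by
      intro v
      constructor
      · rintro ⟨h1, h2⟩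
        constructor
        · intro i hi w hw
          have hiτ : i ≠ τ := by
            intro e; rw [e, hρ] at hw; exact nomatch hw
          have := h1 i hi w hw
          rwa [Function.update_of_ne hiτ] at this
        · intro i hi
          have hiτ : i ≠ τ := by
            intro e; rw [e, hτ1] at hi; exact absurd hi (lt_irrefl t)
          have := h2 i hi
          rwa [Function.update_of_ne hiτ] at this
      · rintro ⟨h1, h2⟩
        constructor
        · intro i hi w hw
          have hiτ : i ≠ τ := by
            intro e; rw [e, hρ] at hw; exact nomatch hw
          rw [Function.update_of_ne hiτ]
          exact h1 i hi w hw
        · intro i hi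
          have hiτ : i ≠ τ := by
            intro e; rw [e, hτ1] at hi; exact absurd hi (lt_irrefl t)
          rw [Function.update_of_ne hiτ]
          exact h2 i hi
    have hcon2 : Rcon ρ (t+1) r ↔ Rcon ρ t r := by
      constructor
      · rintro ⟨h1, h2⟩
        constructor
        · intro i hi w hw
          rcases Nat.eq_or_lt_of_le hi with he | hlt
          · exfalso
            have : i = τ := Fin.ext (by omega)
            rw [this, hρ] at hw; exact nomatch hw
          · exact h1 i (by omega) w hw
        · intro i hi
          exact h2 i (by omega)
      · rintro ⟨h1, h2⟩
        refine ⟨fun i hi => h1 i (by omega), ?_⟩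
        intro i hi
        rcases Nat.lt_or_ge i.1 t with hlt | hge
        · exact h2 i hlt
        · have : i = τ := Fin.ext (by omega)
          rw [this, hrh]
          exact hr
    by_cases hC : Rcon ρ t r
    · rw [if_pos ((hcon false).mpr hC), if_pos ((hcon true).mpr hC),
        if_pos (hcon2.mpr hC)]
      rw [prod_split_t M t ht y (Function.update r τ false),
        prod_split_t M t ht y (Function.update r τ true)]
      rw [prod_tail_upd M t τ rfl y r false, prod_tail_upd M t τ rfl y r true]
      rw [← add_mul]
      have hsum : M.b τ y (Function.update r τ false) + M.b τ y (Function.update r τ true) = 1 := by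
        have := M.b_pmf τ y r
        rw [Fintype.sum_bool] at this
        rw [add_comm]
        exact this
      rw [hsum, one_mul]
    · rw [if_neg (fun h => hC ((hcon false).mp h)),
        if_neg (fun h => hC ((hcon true).mp h)), if_neg (fun h => hC (hcon2.mp h)), add_zero]
  · rw [if_neg hr]
    have : ¬ Rcon ρ (t+1) r := by
      rintro ⟨h1, h2⟩
      exact hr (by rw [h2 τ (by omega), hrh])
    rw [if_neg this]

lemma RS_some (M : Markov K m) (ρ : Fin K → Option Bool) (y : Fin K → Bool)
    (t : ℕ) (ht : t < K) (v : Bool) (hρ : ρ ⟨t, ht⟩ = some v)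
    (hw : ∀ j : Fin K, t ≤ j.1 → j.1 ≤ t + m → (ρ j).isSome) :
    RS M ρ y t = M.b ⟨t, ht⟩ y (rhat ρ) * RS M ρ y (t + 1) := by
  set τ : Fin K := ⟨t, ht⟩ with hτ
  have hτ1 : (τ : ℕ) = t := rfl
  have hrh : rhat ρ τ = v := by simp [rhat, hρ]
  have hbr : ∀ r : Fin K → Bool, Rcon ρ t r → M.b τ y r = M.b τ y (rhat ρ) := by
    rintro r ⟨h1, h2⟩
    apply M.b_local τ y r y (rhat ρ)
    · rw [h1 τ le_rfl v hρ, hrh]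
    · intro j _ _; rfl
    · intro j hj hj2
      have hjs := hw j (by omega) (by omega)
      rcases Option.isSome_iff_exists.mp hjs with ⟨w, hwj⟩
      unfold obs
      rw [h1 j (by omega) w hwj]
      simp [rhat, hwj]
  have key : ∀ r : Fin K → Bool,
      (if Rcon ρ t r then ∏ i : Fin K, (if t ≤ i.1 then M.b i y r else 1) else 0)
      = M.b τ y (rhat ρ) *
        (if Rcon ρ (t+1) r then ∏ i : Fin K, (if t+1 ≤ i.1 then M.b i y r else 1) else 0) := by
    intro r
    by_cases hC : Rcon ρ t r
    · have hC' : Rcon ρ (t+1) r := by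
        obtain ⟨h1, h2⟩ := hC
        refine ⟨fun i hi w hw' => h1 i (by omega) w hw', ?_⟩
        intro i hi
        rcases Nat.lt_or_ge i.1 t with hlt | hge
        · exact h2 i hlt
        · have : i = τ := Fin.ext (by omega)
          rw [this, hrh]
          exact h1 τ le_rfl v hρ
      rw [if_pos hC, if_pos hC', prod_split_t M t ht, hbr r hC]
    · have hC' : ¬ Rcon ρ (t+1) r := by
        rintro ⟨h1, h2⟩
        apply hC
        refine ⟨?_, fun i hi => h2 i (by omega)⟩
        intro i hi w hw'
        rcases Nat.eq_or_lt_of_le hi with he | hlt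
        · have hiτ : i = τ := Fin.ext (by omega)
          rw [hiτ] at hw' ⊢
          rw [hρ] at hw'
          rw [h2 τ (by omega), hrh]
          exact Option.some_inj.mp hw'
        · exact h1 i (by omega) w hw'
      rw [if_neg hC, if_neg hC', mul_zero]
  unfold RS
  rw [Finset.sum_congr rfl (fun r _ => key r), ← Finset.mul_sum]

lemma RS_eval (M : Markov K m) (ρ : Fin K → Option Bool) (y : Fin K → Bool)
    (t : ℕ) (htK : t ≤ K)
    (hρ : ∀ i : Fin K, i.1 < t → (ρ i).isSome →
      ∀ j : Fin K, i.1 ≤ j.1 → j.1 ≤ i.1 + m → (ρ j).isSome) :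
    RS M ρ y 0 = (∏ i : Fin K, if i.1 < t ∧ (ρ i).isSome then M.b i y (rhat ρ) else 1)
      * RS M ρ y t := by
  induction t with
  | zero =>
    simp only [Nat.not_lt_zero, false_and, if_false, Finset.prod_const_one, one_mul]
  | succ t IH =>
    have ht : t < K := by omega
    set τ : Fin K := ⟨t, ht⟩ with hτ
    have hτ1 : (τ : ℕ) = t := rfl
    have step := IH (by omega) (fun i hi hs j h1 h2 => hρ i (by omega) hs j h1 h2)
    rcases hρτ : ρ τ with _ | v
    · have hprod : (∏ i : Fin K, if i.1 < t + 1 ∧ (ρ i).isSome then M.b i y (rhat ρ) else 1)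
          = ∏ i : Fin K, if i.1 < t ∧ (ρ i).isSome then M.b i y (rhat ρ) else 1 := by
        apply Finset.prod_congr rfl
        intro i _
        by_cases hiτ : i = τ
        · rw [hiτ]
          simp [hρτ]
        · have : i.1 ≠ t := fun e => hiτ (Fin.ext e)
          by_cases hc : i.1 < t ∧ (ρ i).isSome
          · rw [if_pos hc, if_pos ⟨by omega, hc.2⟩]
          · rw [if_neg hc, if_neg (by
              rintro ⟨ha, hb⟩
              exact hc ⟨by omega, hb⟩)]
      rw [step, RS_none M ρ y t ht hρτ, hprod]
    · have hws : (ρ τ).isSome := by simp [hρτ]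
      have hw : ∀ j : Fin K, t ≤ j.1 → j.1 ≤ t + m → (ρ j).isSome := by
        intro j h1 h2
        exact hρ τ (by omega) hws j (by omega) (by omega)
      have hprod : (∏ i : Fin K, if i.1 < t + 1 ∧ (ρ i).isSome then M.b i y (rhat ρ) else 1)
          = (∏ i : Fin K, if i.1 < t ∧ (ρ i).isSome then M.b i y (rhat ρ) else 1)
            * M.b τ y (rhat ρ) := by
        have key : ∀ i : Fin K, (if i.1 < t + 1 ∧ (ρ i).isSome then M.b i y (rhat ρ) else 1)
            = (if i.1 < t ∧ (ρ i).isSome then M.b i y (rhat ρ) else 1)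
              * (if i = τ then M.b i y (rhat ρ) else 1) := by
          intro i
          by_cases hiτ : i = τ
          · rw [hiτ]
            simp [hρτ, hws, hτ1]
          · have : i.1 ≠ t := fun e => hiτ (Fin.ext e)
            rw [if_neg hiτ, mul_one]
            by_cases hc : i.1 < t ∧ (ρ i).isSome
            · rw [if_pos hc, if_pos ⟨by omega, hc.2⟩]
            · rw [if_neg hc, if_neg (by
                rintro ⟨ha, hb⟩
                exact hc ⟨by omega, hb⟩)]
        rw [Finset.prod_congr rfl (fun i _ => key i), Finset.prod_mul_distrib]
        congr 1
        rw [Finset.prod_ite_eq' Finset.univ τ (fun i => M.b i y (rhat ρ)),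
          if_pos (Finset.mem_univ _)]
      rw [step, RS_some M ρ y t ht v hρτ hw, hprod]
      ring

end RSdev2
section PrLayer
variable {K m : ℕ}

def Ycon (σ : Fin K → Option Bool) (y : Fin K → Bool) : Prop :=
  ∀ i : Fin K, ∀ v, σ i = some v → y i = v

def yhat (σ : Fin K → Option Bool) : Fin K → Bool := fun i => (σ i).getD false

lemma Ycon_yhat (σ : Fin K → Option Bool) : Ycon σ (yhat σ) := by
  intro i v hv; simp [yhat, hv]

lemma Rcon_rhat (ρ : Fin K → Option Bool) : Rcon ρ 0 (rhat ρ) := by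
  refine ⟨fun i _ v hv => by simp [rhat, hv], fun i hi => absurd hi (by omega)⟩

lemma Pr_pin (M : Markov K m) (σ ρ : Fin K → Option Bool)
    (E : (Fin K → Bool) → (Fin K → Bool) → Prop)
    (hE : ∀ y r, E y r ↔ (Ycon σ y ∧ Rcon ρ 0 r)) :
    Pr M.p E = ∑ y : Fin K → Bool,
      if Ycon σ y then (∏ i : Fin K, M.a i y) * RS M ρ y 0 else 0 := by
  unfold Pr
  apply Finset.sum_congr rfl
  intro y _
  by_cases hy : Ycon σ y
  · rw [if_pos hy]
    unfold RS
    rw [Finset.mul_sum]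
    apply Finset.sum_congr rfl
    intro r _
    by_cases hr : Rcon ρ 0 r
    · rw [if_pos ((hE y r).mpr ⟨hy, hr⟩), if_pos hr, M.factor, Finset.prod_mul_distrib]
      congr 1
    · rw [if_neg (fun h => hr ((hE y r).mp h).2), if_neg hr, mul_zero]
  · rw [if_neg hy]
    apply Finset.sum_eq_zero
    intro r _
    rw [if_neg (fun h => hy ((hE y r).mp h).1)]

lemma Pr_pos (M : Markov K m) (E : (Fin K → Bool) → (Fin K → Bool) → Prop)
    (y0 r0 : Fin K → Bool) (h0 : E y0 r0) : 0 < Pr M.p E := by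
  have hp : ∀ y r : Fin K → Bool, 0 < M.p y r := by
    intro y r
    rw [M.factor]
    exact Finset.prod_pos (fun i _ => mul_pos (M.a_pos i y) (M.b_pos i y r))
  have hnn : ∀ y r : Fin K → Bool, 0 ≤ (if E y r then M.p y r else 0) := by
    intro y r
    by_cases h : E y r
    · rw [if_pos h]; exact le_of_lt (hp y r)
    · rw [if_neg h]
  have hinner : ∀ y : Fin K → Bool,
      0 ≤ ∑ r : Fin K → Bool, (if E y r then M.p y r else 0) :=
    fun y => Finset.sum_nonneg (fun r _ => hnn y r)
  have h1 : M.p y0 r0 ≤ ∑ r : Fin K → Bool, (if E y0 r then M.p y0 r else 0) := by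
    have := Finset.single_le_sum (f := fun r => if E y0 r then M.p y0 r else 0)
      (fun r _ => hnn y0 r) (Finset.mem_univ r0)
    simp only [if_pos h0] at this
    exact this
  have h2 : (∑ r : Fin K → Bool, (if E y0 r then M.p y0 r else 0))
      ≤ Pr M.p E :=
    Finset.single_le_sum (f := fun y => ∑ r : Fin K → Bool, (if E y r then M.p y r else 0))
      (fun y _ => hinner y) (Finset.mem_univ y0)
  exact lt_of_lt_of_le (lt_of_lt_of_le (hp y0 r0) h1) h2

end PrLayer
section Specs
variable {K : ℕ}

def sigS (K m lo hi top : ℕ) (yv : ℕ → Bool) (ov : ℕ → Option Bool) : Fin K → Option Bool :=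
  fun i => if lo - m ≤ i.1 + 1 ∧ i.1 + 1 ≤ hi then some (yv (i.1 + 1))
    else if hi + 1 ≤ i.1 + 1 ∧ i.1 + 1 ≤ top then ov (i.1 + 1) else none

def rhoN (K lo hi top : ℕ) (rv : ℕ → Bool) (ov : ℕ → Option Bool) : Fin K → Option Bool :=
  fun i => if lo ≤ i.1 + 1 ∧ i.1 + 1 ≤ hi then some (rv (i.1 + 1))
    else if hi + 1 ≤ i.1 + 1 ∧ i.1 + 1 ≤ top then some ((ov (i.1 + 1)).isSome) else none

def rhoD (K hi top : ℕ) (ov : ℕ → Option Bool) : Fin K → Option Bool :=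
  fun i => if hi + 1 ≤ i.1 + 1 ∧ i.1 + 1 ≤ top then some ((ov (i.1 + 1)).isSome) else none

/-- conversion of a single `obs` constraint -/
lemma obs_eq_iff (y r : Fin K → Bool) (i : Fin K) (o : Option Bool) :
    obs y r i = o ↔ (r i = o.isSome ∧ ∀ c, o = some c → y i = c) := by
  unfold obs
  rcases o with _ | c
  · cases hri : r i <;> simp [hri]
  · cases hri : r i <;> simp [hri]

lemma eventN_iff (m lo hi top : ℕ) (hlh : lo ≤ hi) (yv rv : ℕ → Bool) (ov : ℕ → Option Bool)
    (y r : Fin K → Bool) :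
    (Req lo hi rv y r ∧ (Yeq (lo - m) hi yv y r ∧ Oeq (hi + 1) top ov y r)) ↔
      (Ycon (sigS K m lo hi top yv ov) y ∧ Rcon (rhoN K lo hi top rv ov) 0 r) := by
  constructor
  · rintro ⟨hR, hY, hO⟩
    constructor
    · intro i v hv
      unfold sigS at hv
      by_cases h1 : lo - m ≤ i.1 + 1 ∧ i.1 + 1 ≤ hi
      · rw [if_pos h1] at hv
        rw [hY i h1.1 h1.2]
        exact Option.some_inj.mp hv
      · rw [if_neg h1] at hv
        by_cases h2 : hi + 1 ≤ i.1 + 1 ∧ i.1 + 1 ≤ top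
        · rw [if_pos h2] at hv
          have := hO i h2.1 h2.2
          rw [hv] at this
          exact ((obs_eq_iff y r i (some v)).mp this).2 v rfl
        · rw [if_neg h2] at hv
          exact nomatch hv
    · refine ⟨?_, fun i hi => absurd hi (by omega)⟩
      intro i _ v hv
      unfold rhoN at hv
      by_cases h1 : lo ≤ i.1 + 1 ∧ i.1 + 1 ≤ hi
      · rw [if_pos h1] at hv
        rw [hR i h1.1 h1.2]
        exact Option.some_inj.mp hv
      · rw [if_neg h1] at hv
        by_cases h2 : hi + 1 ≤ i.1 + 1 ∧ i.1 + 1 ≤ top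
        · rw [if_pos h2] at hv
          have := hO i h2.1 h2.2
          have hreq := ((obs_eq_iff y r i (ov (i.1+1))).mp this).1
          rw [hreq]
          exact Option.some_inj.mp hv
        · rw [if_neg h2] at hv
          exact nomatch hv
  · rintro ⟨hYc, hRc, -⟩
    refine ⟨?_, ?_, ?_⟩
    · intro j h1 h2
      exact hRc j (Nat.zero_le _) _ (by unfold rhoN; rw [if_pos ⟨h1, h2⟩])
    · intro j h1 h2
      exact hYc j _ (by unfold sigS; rw [if_pos ⟨h1, h2⟩])
    · intro j h1 h2
      have hb1 : ¬ (lo - m ≤ j.1 + 1 ∧ j.1 + 1 ≤ hi) := by omega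
      have hb1' : ¬ (lo ≤ j.1 + 1 ∧ j.1 + 1 ≤ hi) := by omega
      have hρ : rhoN K lo hi top rv ov j = some ((ov (j.1+1)).isSome) := by
        unfold rhoN; rw [if_neg hb1', if_pos ⟨h1, h2⟩]
      have hσ : sigS K m lo hi top yv ov j = ov (j.1+1) := by
        unfold sigS; rw [if_neg hb1, if_pos ⟨h1, h2⟩]
      apply (obs_eq_iff y r j (ov (j.1+1))).mpr
      refine ⟨hRc j (Nat.zero_le _) _ hρ, ?_⟩
      intro c hc
      apply hYc j c
      rw [hσ, hc]

lemma eventD_iff (m lo hi top : ℕ) (hlh : lo ≤ hi) (yv : ℕ → Bool) (ov : ℕ → Option Bool)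
    (y r : Fin K → Bool) :
    (Yeq (lo - m) hi yv y r ∧ Oeq (hi + 1) top ov y r) ↔
      (Ycon (sigS K m lo hi top yv ov) y ∧ Rcon (rhoD K hi top ov) 0 r) := by
  constructor
  · rintro ⟨hY, hO⟩
    constructor
    · intro i v hv
      unfold sigS at hv
      by_cases h1 : lo - m ≤ i.1 + 1 ∧ i.1 + 1 ≤ hi
      · rw [if_pos h1] at hv
        rw [hY i h1.1 h1.2]
        exact Option.some_inj.mp hv
      · rw [if_neg h1] at hv
        by_cases h2 : hi + 1 ≤ i.1 + 1 ∧ i.1 + 1 ≤ top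
        · rw [if_pos h2] at hv
          have := hO i h2.1 h2.2
          rw [hv] at this
          exact ((obs_eq_iff y r i (some v)).mp this).2 v rfl
        · rw [if_neg h2] at hv
          exact nomatch hv
    · refine ⟨?_, fun i hi => absurd hi (by omega)⟩
      intro i _ v hv
      unfold rhoD at hv
      by_cases h2 : hi + 1 ≤ i.1 + 1 ∧ i.1 + 1 ≤ top
      · rw [if_pos h2] at hv
        have := hO i h2.1 h2.2
        have hreq := ((obs_eq_iff y r i (ov (i.1+1))).mp this).1
        rw [hreq]
        exact Option.some_inj.mp hv
      · rw [if_neg h2] at hv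
        exact nomatch hv
  · rintro ⟨hYc, hRc⟩
    refine ⟨?_, ?_⟩
    · intro j h1 h2
      exact hYc j _ (by unfold sigS; rw [if_pos ⟨h1, h2⟩])
    · intro j h1 h2
      have hb1 : ¬ (lo - m ≤ j.1 + 1 ∧ j.1 + 1 ≤ hi) := by omega
      have hρ : rhoD K hi top ov j = some ((ov (j.1+1)).isSome) := by
        unfold rhoD; rw [if_pos ⟨h1, h2⟩]
      have hσ : sigS K m lo hi top yv ov j = ov (j.1+1) := by
        unfold sigS; rw [if_neg hb1, if_pos ⟨h1, h2⟩]
      apply (obs_eq_iff y r j (ov (j.1+1))).mpr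
      refine ⟨hRc.1 j (Nat.zero_le _) _ hρ, ?_⟩
      intro c hc
      apply hYc j c
      rw [hσ, hc]

end Specs
section LemA
variable {K m : ℕ}

lemma lemA (M : Markov K m) (lo hi top : ℕ) (yv rv : ℕ → Bool) (ov : ℕ → Option Bool)
    (hlo : m + 1 ≤ lo) (hlh : lo ≤ hi) (hhK : hi ≤ K)
    (htop : ∀ n, hi < n → n ≤ hi + m → n ≤ K → n ≤ top) :
    cPr M.p (Req lo hi rv) (fun y r => Yeq (lo - m) hi yv y r ∧ Oeq (hi + 1) top ov y r)
      = ∏ i : Fin K, if lo ≤ i.1 + 1 ∧ i.1 + 1 ≤ hi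
          then M.b i (yhat (sigS K m lo hi top yv ov)) (rhat (rhoN K lo hi top rv ov))
          else 1 := by
  set σ := sigS K m lo hi top yv ov with hσdef
  set ρN := rhoN K lo hi top rv ov with hρNdef
  set ρD := rhoD K hi top ov with hρDdef
  -- basic facts about the specs
  have hρN_block : ∀ i : Fin K, lo ≤ i.1 + 1 → i.1 + 1 ≤ hi → ρN i = some (rv (i.1 + 1)) := by
    intro i h1 h2
    rw [hρNdef]; unfold rhoN; rw [if_pos ⟨h1, h2⟩]
  have hρN_some_iff : ∀ i : Fin K, i.1 < hi → ((ρN i).isSome ↔ (lo ≤ i.1 + 1 ∧ i.1 + 1 ≤ hi)) := by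
    intro i hih
    constructor
    · intro hs
      by_contra hc
      have h2 : i.1 + 1 ≤ hi := by omega
      have hb2 : ¬ (hi + 1 ≤ i.1 + 1 ∧ i.1 + 1 ≤ top) := by omega
      rw [hρNdef] at hs; unfold rhoN at hs
      rw [if_neg (by tauto), if_neg hb2] at hs
      simp at hs
    · rintro ⟨h1, h2⟩
      rw [hρN_block i h1 h2]
      simp
  have hρwin : ∀ i : Fin K, i.1 < hi → (ρN i).isSome →
      ∀ j : Fin K, i.1 ≤ j.1 → j.1 ≤ i.1 + m → (ρN j).isSome := by
    intro i hih hs j hj1 hj2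
    have hblk := (hρN_some_iff i hih).mp hs
    by_cases hjhi : j.1 + 1 ≤ hi
    · rw [hρN_block j (by omega) hjhi]; simp
    · have h2 : j.1 + 1 ≤ top := htop (j.1 + 1) (by omega) (by omega) (by omega)
      rw [hρNdef]; unfold rhoN
      rw [if_neg (by omega), if_pos ⟨by omega, h2⟩]
      simp
  have hagree : ∀ i : Fin K, hi ≤ i.1 → ρN i = ρD i := by
    intro i hihi
    rw [hρNdef, hρDdef]; unfold rhoN rhoD
    rw [if_neg (by omega)]
  -- b-factor only depends on pinned coordinates
  have hbfac : ∀ (y : Fin K → Bool), Ycon σ y → ∀ i : Fin K,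
      lo ≤ i.1 + 1 → i.1 + 1 ≤ hi →
      M.b i y (rhat ρN) = M.b i (yhat σ) (rhat ρN) := by
    intro y hy i h1 h2
    apply M.b_local i y (rhat ρN) (yhat σ) (rhat ρN) rfl
    · intro j hj1 hj2
      have hσj : σ j = some (yv (j.1 + 1)) := by
        rw [hσdef]; unfold sigS
        rw [if_pos ⟨by omega, by omega⟩]
      rw [hy j _ hσj]
      simp [yhat, hσj]
    · intro j hj1 hj2
      unfold obs
      cases hrj : rhat ρN j with
      | false => rfl
      | true =>
        have hρj : ρN j = some true := by
          revert hrj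
          unfold rhat
          cases hv : ρN j with
          | none => simp
          | some w => simp
        have hyj : y j = yhat σ j := by
          rw [hρNdef] at hρj; unfold rhoN at hρj
          by_cases hb1 : lo ≤ j.1 + 1 ∧ j.1 + 1 ≤ hi
          · have hσj : σ j = some (yv (j.1 + 1)) := by
              rw [hσdef]; unfold sigS
              rw [if_pos ⟨by omega, by omega⟩]
            rw [hy j _ hσj]
            simp [yhat, hσj]
          · rw [if_neg hb1] at hρj
            by_cases hb2 : hi + 1 ≤ j.1 + 1 ∧ j.1 + 1 ≤ top
            · rw [if_pos hb2] at hρj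
              have hsome : (ov (j.1+1)).isSome = true := Option.some_inj.mp hρj
              rcases Option.isSome_iff_exists.mp hsome with ⟨c, hc⟩
              have hσj : σ j = some c := by
                rw [hσdef]; unfold sigS
                rw [if_neg (by omega), if_pos hb2, hc]
              rw [hy j _ hσj]
              simp [yhat, hσj]
            · rw [if_neg hb2] at hρj
              exact nomatch hρj
        rw [hyj]
  -- numerator and denominator
  have hNum : Pr M.p (fun y r => Req lo hi rv y r ∧
        (Yeq (lo - m) hi yv y r ∧ Oeq (hi + 1) top ov y r))
      = (∏ i : Fin K, if lo ≤ i.1 + 1 ∧ i.1 + 1 ≤ hi then M.b i (yhat σ) (rhat ρN) else 1)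
        * ∑ y : Fin K → Bool, if Ycon σ y then (∏ i : Fin K, M.a i y) * RS M ρD y hi else 0 := by
    rw [Pr_pin M σ ρN _ (fun y r => eventN_iff m lo hi top hlh yv rv ov y r)]
    rw [Finset.mul_sum]
    apply Finset.sum_congr rfl
    intro y _
    by_cases hy : Ycon σ y
    · rw [if_pos hy, if_pos hy]
      rw [RS_eval M ρN y hi hhK hρwin]
      have hB : (∏ i : Fin K, if i.1 < hi ∧ (ρN i).isSome then M.b i y (rhat ρN) else 1)
          = ∏ i : Fin K, if lo ≤ i.1 + 1 ∧ i.1 + 1 ≤ hi then M.b i (yhat σ) (rhat ρN) else 1 := by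
        apply Finset.prod_congr rfl
        intro i _
        by_cases hc : i.1 < hi ∧ (ρN i).isSome
        · have hblk := (hρN_some_iff i hc.1).mp hc.2
          rw [if_pos hc, if_pos hblk, hbfac y hy i hblk.1 hblk.2]
        · rw [if_neg hc, if_neg (by
            rintro ⟨h1, h2⟩
            exact hc ⟨by omega, (hρN_some_iff i (by omega)).mpr ⟨h1, h2⟩⟩)]
      rw [hB, RS_agree M ρN ρD y hi hagree]
      ring
    · rw [if_neg hy, if_neg hy, mul_zero]
  have hDen : Pr M.p (fun y r => Yeq (lo - m) hi yv y r ∧ Oeq (hi + 1) top ov y r)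
      = ∑ y : Fin K → Bool, if Ycon σ y then (∏ i : Fin K, M.a i y) * RS M ρD y hi else 0 := by
    rw [Pr_pin M σ ρD _ (fun y r => eventD_iff m lo hi top hlh yv ov y r)]
    apply Finset.sum_congr rfl
    intro y _
    by_cases hy : Ycon σ y
    · rw [if_pos hy, if_pos hy]
      have hρDwin : ∀ i : Fin K, i.1 < hi → (ρD i).isSome →
          ∀ j : Fin K, i.1 ≤ j.1 → j.1 ≤ i.1 + m → (ρD j).isSome := by
        intro i hih hs
        exfalso
        rw [hρDdef] at hs; unfold rhoD at hs
        rw [if_neg (by omega)] at hs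
        simp at hs
      rw [RS_eval M ρD y hi hhK hρDwin]
      have : (∏ i : Fin K, if i.1 < hi ∧ (ρD i).isSome then M.b i y (rhat ρD) else 1) = 1 := by
        apply Finset.prod_eq_one
        intro i _
        rw [if_neg (by
          rintro ⟨h1, h2⟩
          rw [hρDdef] at h2; unfold rhoD at h2
          rw [if_neg (by omega)] at h2
          simp at h2)]
      rw [this, one_mul]
    · rw [if_neg hy, if_neg hy]
  have hpos : 0 < Pr M.p (fun y r => Yeq (lo - m) hi yv y r ∧ Oeq (hi + 1) top ov y r) := by
    apply Pr_pos M _ (yhat σ) (rhat ρD)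
    exact (eventD_iff m lo hi top hlh yv ov (yhat σ) (rhat ρD)).mpr
      ⟨Ycon_yhat σ, Rcon_rhat ρD⟩
  unfold cPr
  rw [hNum, hDen, mul_div_assoc, div_self (ne_of_gt (hDen ▸ hpos)), mul_one]

end LemA
section Final
variable {K m : ℕ}

lemma obs_opt (y r : Fin K → Bool) (j : Fin K) (o : Option Bool)
    (hr : r j = o.isSome) (hy : ∀ c, o = some c → y j = c) : obs y r j = o := by
  rcases o with _ | c
  · unfold obs
    rw [hr]
    simp
  · unfold obs
    rw [hr]
    simp only [Option.isSome_some, if_true]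
    rw [hy c rfl]

lemma crossEq (M : Markov K m) (k j : ℕ) (yv rv : ℕ → Bool) (ov : ℕ → Option Bool)
    (hk1 : m < k) (hkj : k ≤ j) (hjk : j ≤ k + m) (i : Fin K) (hij : i.1 + 1 = j) :
    M.b i
      (yhat (sigS K m j j (j + m) yv
        (fun n => if k + m + 1 ≤ n then ov n else if rv n then some (yv n) else none)))
      (rhat (rhoN K j j (j + m) rv
        (fun n => if k + m + 1 ≤ n then ov n else if rv n then some (yv n) else none)))
      = M.b i (yhat (sigS K m k (k + m) K yv ov)) (rhat (rhoN K k (k + m) K rv ov)) := by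
  set ovp : ℕ → Option Bool :=
    fun n => if k + m + 1 ≤ n then ov n else if rv n then some (yv n) else none with hovp
  apply M.b_local
  · unfold rhat rhoN
    rw [if_pos ⟨by omega, by omega⟩, if_pos ⟨by omega, by omega⟩]
  · intro j' h1 h2
    unfold yhat sigS
    rw [if_pos ⟨by omega, by omega⟩, if_pos ⟨by omega, by omega⟩]
  · intro j' h1 h2
    have hp1 : j < j'.1 + 1 := by omega
    have hp2 : j'.1 + 1 ≤ j + m := by omega
    have hL : obs (yhat (sigS K m j j (j + m) yv ovp)) (rhat (rhoN K j j (j + m) rv ovp)) j'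
        = ovp (j'.1 + 1) := by
      apply obs_opt
      · unfold rhat rhoN
        rw [if_neg (by omega), if_pos ⟨by omega, by omega⟩]
        rfl
      · intro c hc
        unfold yhat sigS
        rw [if_neg (by omega), if_pos ⟨by omega, by omega⟩, hc]
        rfl
    rw [hL]
    by_cases hp : j'.1 + 1 ≤ k + m
    · have hv : ovp (j'.1 + 1) = if rv (j'.1 + 1) then some (yv (j'.1 + 1)) else none := by
        rw [hovp]
        simp only [if_neg (by omega : ¬ k + m + 1 ≤ j'.1 + 1)]
      rw [hv]
      symm
      apply obs_opt
      · unfold rhat rhoN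
        rw [if_pos ⟨by omega, by omega⟩]
        cases hrv : rv (j'.1 + 1) <;> simp [hrv]
      · intro c hc
        cases hrv : rv (j'.1 + 1) with
        | false =>
          rw [hrv] at hc
          simp at hc
        | true =>
          rw [hrv] at hc
          simp only [if_true] at hc
          unfold yhat sigS
          rw [if_pos ⟨by omega, by omega⟩]
          simpa using hc
    · have hv : ovp (j'.1 + 1) = ov (j'.1 + 1) := by
        rw [hovp]
        simp only [if_pos (by omega : k + m + 1 ≤ j'.1 + 1)]
      rw [hv]
      symm
      apply obs_opt
      · unfold rhat rhoN
        rw [if_neg (by omega), if_pos ⟨by omega, by omega⟩]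
        rfl
      · intro c hc
        unfold yhat sigS
        rw [if_neg (by omega), if_pos ⟨by omega, by omega⟩, hc]
        rfl

end Final

/-- Block factorization of the middle response indicators.  Under the
`m`th-order Markov model, for every `m < k < K − m − 1` and all values of the variables,
`f(R̲^{m+1}_{k−1} | Ȳ^{2m+1}_{k+m+1}, O̲_{k+m}) = ∏_{j=k}^{k+m} f(Rⱼ | Ȳ^{m+1}_{j+1}, O̲ᵐⱼ)`,
where the `O`-arguments in each factor are determined by the conditioning values
(`Oⱼ = ov j` for conditioned positions `j ≥ k + m + 1`, and `Oⱼ = (rv j, yv j)` for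
positions in the block, determined by conditioned outcomes and the block `R`-values). -/
theorem statement13 (K m : ℕ) (hm : 1 ≤ m) (hKm : 2 * m + 1 < K) (M : Markov K m)
    (k : ℕ) (hk1 : m < k) (hk2 : k < K - m - 1)
    (yv : ℕ → Bool) (rv : ℕ → Bool) (ov : ℕ → Option Bool) :
    cPr M.p (Req k (k + m) rv)
        (fun y r => Yeq (k - m) (k + m) yv y r ∧ Oeq (k + m + 1) K ov y r)
      = ∏ j ∈ Finset.Icc k (k + m),
          cPr M.p (Req j j rv)
            (fun y r => Yeq (j - m) j yv y r ∧
              Oeq (j + 1) (j + m)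
                (fun n => if k + m + 1 ≤ n then ov n
                  else if rv n then some (yv n) else none) y r) := by
  have hK1 : k + m ≤ K := by omega
  set ovp : ℕ → Option Bool :=
    fun n => if k + m + 1 ≤ n then ov n else if rv n then some (yv n) else none with hovp
  rw [lemA M k (k + m) K yv rv ov (by omega) (by omega) hK1 (fun n _ _ h3 => h3)]
  have e2 : ∀ j ∈ Finset.Icc k (k + m),
      cPr M.p (Req j j rv)
        (fun y r => Yeq (j - m) j yv y r ∧ Oeq (j + 1) (j + m) ovp y r)
      = ∏ i : Fin K, if j ≤ i.1 + 1 ∧ i.1 + 1 ≤ j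
          then M.b i (yhat (sigS K m j j (j + m) yv ovp)) (rhat (rhoN K j j (j + m) rv ovp))
          else 1 := by
    intro j hj
    rw [Finset.mem_Icc] at hj
    exact lemA M j j (j + m) yv rv ovp (by omega) le_rfl (by omega) (fun n _ h2 _ => h2)
  rw [Finset.prod_congr rfl e2, Finset.prod_comm]
  apply Finset.prod_congr rfl
  intro i _
  have e3 : ∀ j ∈ Finset.Icc k (k + m),
      (if j ≤ i.1 + 1 ∧ i.1 + 1 ≤ j
        then M.b i (yhat (sigS K m j j (j + m) yv ovp)) (rhat (rhoN K j j (j + m) rv ovp))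
        else 1)
      = (if i.1 + 1 = j
        then M.b i (yhat (sigS K m j j (j + m) yv ovp)) (rhat (rhoN K j j (j + m) rv ovp))
        else 1) := by
    intro j _
    by_cases h : i.1 + 1 = j
    · rw [if_pos h, if_pos (by omega)]
    · rw [if_neg h, if_neg (by omega)]
  rw [Finset.prod_congr rfl e3,
    Finset.prod_ite_eq (Finset.Icc k (k + m)) (i.1 + 1)
      (fun j => M.b i (yhat (sigS K m j j (j + m) yv ovp)) (rhat (rhoN K j j (j + m) rv ovp)))]
  simp only [Finset.mem_Icc]
  by_cases hc : k ≤ i.1 + 1 ∧ i.1 + 1 ≤ k + m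
  · rw [if_pos hc, if_pos hc]
    exact (crossEq M k (i.1 + 1) yv rv ov hk1 hc.1 hc.2 i rfl).symm
  · rw [if_neg hc, if_neg hc]


end MRM
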